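/- Let n ≥ 6 and let 𝔤 be an n-dimensional non-model complex filiform Lie algebra with associated triple (n−2,n−2,n). Then there exist an adapted basis {f_1,…,f_n} of 𝔤 and complex numbers γ′, β′ such that the only nonzero brackets among the basis vectors (up to antisymmetry) are [f_1,f_h] = f_{h−1} for 3 ≤ h ≤ n, [f_{n−2},f_{n−1}] = f_2, [f_{n−2},f_n] = f_3 + γ′ f_2, and [f_{n−1},f_n] = f_4 + γ′ f_3 + β′ f_2. -/

import Mathlib

open Module

variable (L : Type) [LieRing L] [LieAlgebra ℂ L]

/-- `C L k` is the `k`-th term of the lower central series of `L`,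
with the convention `C L 1 = L`. -/
def C (k : ℕ) : LieIdeal ℂ L := LieModule.lowerCentralSeries ℂ L L (k - 1)

/-- `L` is a filiform Lie algebra of dimension `n`. -/
def IsFiliform (n : ℕ) : Prop :=
  2 ≤ n ∧ FiniteDimensional ℂ L ∧ finrank ℂ L = n ∧
    ∀ k, 2 ≤ k → k ≤ n → finrank ℂ (C L k) = n - k

/-- `e 1, …, e n` is an adapted basis of `L`. -/
def IsAdaptedBasis (n : ℕ) (e : ℕ → L) : Prop :=
  (∃ b : Basis (Fin n) ℂ L, ∀ i : Fin n, b i = e (i.1 + 1)) ∧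
  (∀ h, 3 ≤ h → h ≤ n → ⁅e 1, e h⁆ = e (h - 1)) ∧
  (∀ h, 1 ≤ h → h ≤ n → ⁅e 2, e h⁆ = 0) ∧
  (∀ h, 2 ≤ h → h ≤ n → ⁅e 3, e h⁆ = 0)

/-- `L` is (isomorphic to) the model filiform Lie algebra of dimension `n`,
i.e. it admits a basis whose only nonzero brackets are `⁅e 1, e h⁆ = e (h-1)`. -/
def IsModel (n : ℕ) : Prop :=
  ∃ e : ℕ → L,
    (∃ b : Basis (Fin n) ℂ L, ∀ i : Fin n, b i = e (i.1 + 1)) ∧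
    (∀ h, 3 ≤ h → h ≤ n → ⁅e 1, e h⁆ = e (h - 1)) ∧
    ⁅e 1, e 2⁆ = 0 ∧
    (∀ i j, 2 ≤ i → i < j → j ≤ n → ⁅e i, e j⁆ = 0)

/-- `L` is a non-model filiform Lie algebra with associated triple `(z₁, z₂, n)`. -/
def HasTriple (z₁ z₂ n : ℕ) : Prop :=
  IsFiliform L n ∧ ¬ IsModel L n ∧
  ∀ e : ℕ → L, IsAdaptedBasis L n e →
    IsLeast {k | 4 ≤ k ∧ ⁅e k, e n⁆ ≠ 0} z₁ ∧
    IsLeast {k | 4 ≤ k ∧ ⁅e k, e (k + 1)⁆ ≠ 0} z₂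

/-- `θ_k(L)`: the least `ℓ ≥ 1` with `⁅C^k L, C^ℓ L⁆ = 0`. -/
noncomputable def theta (k : ℕ) : ℕ := sInf {ℓ | 1 ≤ ℓ ∧ ⁅C L k, C L ℓ⁆ = ⊥}

/-- `P h u` is the `h`-th coordinate of `u` in the basis `e 1, …, e n` (and `0` for
`h` outside `{1, …, n}`). -/
def IsCoords (n : ℕ) (e : ℕ → L) (P : ℕ → L → ℂ) : Prop :=
  (∀ u : L, u = ∑ h ∈ Finset.Icc 1 n, P h u • e h) ∧
  (∀ u : L, ∀ h, h ∉ Finset.Icc 1 n → P h u = 0)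

/-- `(α, γ, β)` is a family of parameters associated with `L` (with triple `(z₁, z₂, n)`)
with respect to the adapted basis `e` with coordinate functions `P`. -/
def IsAssocParams (z₁ z₂ n : ℕ) (e : ℕ → L) (P : ℕ → L → ℂ)
    (α γ : ℕ → ℂ) (β : ℕ → ℕ → ℂ) : Prop :=
  (∀ i, i ≤ z₂ - z₁ →
    ⁅e (z₁ + i), e (z₂ + 1)⁆ = ∑ m ∈ Finset.Icc 1 (i + 1), α m • e (i + 3 - m)) ∧
  (∀ j, 2 ≤ j → j ≤ n - z₂ →
    ⁅e z₁, e (z₂ + j)⁆ =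
      α 1 • e (j + 1) + ∑ m ∈ Finset.Icc 1 (j - 1), γ m • e (j + 1 - m)) ∧
  (∀ k ℓ, 2 ≤ ℓ → ℓ ≤ n - z₂ → 1 ≤ k → k < z₂ - z₁ + ℓ →
    ⁅e (z₁ + k), e (z₂ + ℓ)⁆ =
      (∑ h ∈ Finset.Icc 2 (k + ℓ),
        P h (⁅e (z₁ + k - 1), e (z₂ + ℓ)⁆ + ⁅e (z₁ + k), e (z₂ + ℓ - 1)⁆) • e (h + 1))
      + β k ℓ • e 2)

/-- The normalized bracket table for triple `(n-2, n-2, n)`: the only nonzero brackets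
among the basis vectors `f 1, …, f n` (up to antisymmetry) are the displayed ones. -/
def LawNm2Normalized (n : ℕ) (f : ℕ → L) (γ' β' : ℂ) : Prop :=
  ⁅f 1, f 2⁆ = 0 ∧
  (∀ h, 3 ≤ h → h ≤ n → ⁅f 1, f h⁆ = f (h - 1)) ∧
  (∀ i j, 2 ≤ i → i < j → j ≤ n →
    ¬(i = n - 2 ∧ j = n - 1) → ¬(i = n - 2 ∧ j = n) → ¬(i = n - 1 ∧ j = n) →
    ⁅f i, f j⁆ = 0) ∧
  ⁅f (n - 2), f (n - 1)⁆ = f 2 ∧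
  ⁅f (n - 2), f n⁆ = f 3 + γ' • f 2 ∧
  ⁅f (n - 1), f n⁆ = f 4 + γ' • f 3 + β' • f 2


lemma lie_sum_right {ι : Type*} (x : L) (s : Finset ι) (f : ι → L) :
    ⁅x, ∑ i ∈ s, f i⁆ = ∑ i ∈ s, ⁅x, f i⁆ := by
  classical
  induction s using Finset.induction with
  | empty => simp
  | insert _ _ hni ih => rw [Finset.sum_insert hni, Finset.sum_insert hni, lie_add, ih]

lemma sum_shift (n : ℕ) (f : ℕ → L) :
    ∑ h ∈ Finset.Icc 1 n, f h = ∑ i : Fin n, f (i.1 + 1) := by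
  refine (Finset.sum_bij' (fun (i : Fin n) (_ : i ∈ Finset.univ) => i.1 + 1)
    (fun h (hh : h ∈ Finset.Icc 1 n) =>
      (⟨h - 1, by simp only [Finset.mem_Icc] at hh; omega⟩ : Fin n))
    (fun a _ => by have := a.isLt; simp only [Finset.mem_Icc]; omega)
    (fun a _ => Finset.mem_univ _)
    (fun a _ => by ext; simp only; omega)
    (fun a ha => by simp only [Finset.mem_Icc] at ha; show a - 1 + 1 = a; omega)
    (fun a _ => rfl)).symm

lemma indep_coeff (n : ℕ) (b : Basis (Fin n) ℂ L) (e : ℕ → L)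
    (hb : ∀ i : Fin n, b i = e (i.1 + 1)) (a : ℕ → ℂ)
    (hsum : ∑ h ∈ Finset.Icc 1 n, a h • e h = 0) :
    ∀ h, 1 ≤ h → h ≤ n → a h = 0 := by
  intro h h1 h2
  have hsum' : ∑ i : Fin n, a (i.1 + 1) • b i = 0 := by
    rw [← hsum, sum_shift L n (fun h => a h • e h)]
    exact Finset.sum_congr rfl (fun i _ => by rw [hb i])
  have hz := Fintype.linearIndependent_iff.mp b.linearIndependent
    (fun i => a (i.1 + 1)) hsum' ⟨h - 1, by omega⟩
  simpa only [show h - 1 + 1 = h by omega] using hz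

lemma expand_coords (n : ℕ) (b : Basis (Fin n) ℂ L) (e : ℕ → L)
    (hb : ∀ i : Fin n, b i = e (i.1 + 1)) (u : L) :
    ∃ c : ℕ → ℂ, u = ∑ h ∈ Finset.Icc 1 n, c h • e h := by
  refine ⟨fun h => if hh : 1 ≤ h ∧ h ≤ n then b.repr u ⟨h - 1, by omega⟩ else 0, ?_⟩
  rw [sum_shift]
  conv_lhs => rw [← b.sum_repr u]
  refine Finset.sum_congr rfl (fun i _ => ?_)
  rw [hb i]
  show (b.repr u) i • e (i.1 + 1) =
    (if hh : 1 ≤ i.1 + 1 ∧ i.1 + 1 ≤ n then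
      (b.repr u) ⟨i.1 + 1 - 1, by omega⟩ else 0) • e (i.1 + 1)
  rw [dif_pos ⟨by omega, by omega⟩]
  have hfin : (⟨i.1 + 1 - 1, by omega⟩ : Fin n) = i := by ext; simp only; omega
  rw [hfin]


lemma lcs_lie_lcs_le (j i : ℕ) :
    ⁅LieModule.lowerCentralSeries ℂ L L i, LieModule.lowerCentralSeries ℂ L L j⁆ ≤
      LieModule.lowerCentralSeries ℂ L L (i + j + 1) := by
  induction j generalizing i with
  | zero =>
    rw [LieModule.lowerCentralSeries_zero, LieSubmodule.lie_comm,
      ← LieModule.lowerCentralSeries_succ]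
  | succ j ih =>
    rw [LieSubmodule.lie_le_iff]
    intro x hx m hm
    rw [LieModule.lowerCentralSeries_succ] at hm
    have hm' : m ∈ Submodule.span ℂ { m : L | ∃ z ∈ (⊤ : LieIdeal ℂ L),
        ∃ n ∈ LieModule.lowerCentralSeries ℂ L L j, ⁅z, n⁆ = m } := by
      rw [← LieSubmodule.lieIdeal_oper_eq_linear_span']
      exact hm
    have key : ∀ m' ∈ Submodule.span ℂ { m : L | ∃ z ∈ (⊤ : LieIdeal ℂ L),
        ∃ n ∈ LieModule.lowerCentralSeries ℂ L L j, ⁅z, n⁆ = m },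
        ⁅x, m'⁆ ∈ LieModule.lowerCentralSeries ℂ L L (i + (j+1) + 1) := by
      intro m' hm'
      induction hm' using Submodule.span_induction with
      | mem w hw =>
        obtain ⟨z, -, nn, hn, rfl⟩ := hw
        have h1 : ⁅x, ⁅z, nn⁆⁆ = ⁅⁅x, z⁆, nn⁆ + ⁅z, ⁅x, nn⁆⁆ := leibniz_lie x z nn
        rw [h1]
        refine add_mem ?_ ?_
        · have hxz : ⁅x, z⁆ ∈ LieModule.lowerCentralSeries ℂ L L (i+1) := by
            rw [LieModule.lowerCentralSeries_succ, LieSubmodule.lie_comm]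
            exact LieSubmodule.lie_mem_lie hx (LieSubmodule.mem_top z)
          have := ih (i+1) (LieSubmodule.lie_mem_lie hxz hn)
          convert this using 2
          omega
        · have hxn : ⁅x, nn⁆ ∈ LieModule.lowerCentralSeries ℂ L L (i + j + 1) :=
            ih i (LieSubmodule.lie_mem_lie hx hn)
          rw [LieModule.lowerCentralSeries_succ]
          exact LieSubmodule.lie_mem_lie (LieSubmodule.mem_top z) hxn
      | zero => simp
      | add a b _ _ ha hb => rw [lie_add]; exact add_mem ha hb
      | smul c a _ ha => rw [lie_smul]; exact (LieModule.lowerCentralSeries ℂ L L _).smul_mem' c ha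
    exact key m hm'

lemma span_step {V W : Submodule ℂ L} [FiniteDimensional ℂ L] (hWV : W ≤ V) {x : L}
    (hx : x ∈ V) (hxW : x ∉ W) (hr : finrank ℂ V ≤ finrank ℂ W + 1) :
    V ≤ W ⊔ Submodule.span ℂ {x} := by
  have hle : W ⊔ Submodule.span ℂ {x} ≤ V := by
    refine sup_le hWV ?_
    rwa [Submodule.span_singleton_le_iff_mem]
  have hlt : W < W ⊔ Submodule.span ℂ {x} := by
    refine lt_of_le_of_ne le_sup_left (fun hEq => hxW ?_)
    rw [hEq]
    exact Submodule.mem_sup_right (Submodule.mem_span_singleton_self x)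
  have h1 : finrank ℂ W < finrank ℂ ↥(W ⊔ Submodule.span ℂ {x}) :=
    Submodule.finrank_lt_finrank_of_lt hlt
  have := Submodule.eq_of_le_of_finrank_le hle (by omega)
  rw [this]

lemma exists_adapted (n : ℕ) (hn : 6 ≤ n) (hf : IsFiliform L n) :
    ∃ e : ℕ → L, IsAdaptedBasis L n e := by
  obtain ⟨-, hFD, hdim, hrk⟩ := hf
  set K : ℕ → Submodule ℂ L := fun k => (C L k : Submodule ℂ L) with hKdef
  have hrk' : ∀ k, 2 ≤ k → k ≤ n → finrank ℂ (K k) = n - k := hrk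
  have hC1 : C L 1 = ⊤ := LieModule.lowerCentralSeries_zero ℂ L L
  have hmono : ∀ a b, a ≤ b → C L b ≤ C L a := fun a b hab =>
    LieModule.antitone_lowerCentralSeries ℂ L L (by omega)
  have hKmono : ∀ a b, a ≤ b → K b ≤ K a := fun a b hab =>
    (LieSubmodule.toSubmodule_le_toSubmodule _ _).mpr (hmono a b hab)
  have hCsucc : ∀ k, 1 ≤ k → C L (k+1) = ⁅(⊤ : LieIdeal ℂ L), C L k⁆ := by
    intro k hk
    unfold C
    have : k + 1 - 1 = (k - 1) + 1 := by omega
    rw [this, LieModule.lowerCentralSeries_succ]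
  have hKbot : ∀ m, n ≤ m → K m = ⊥ := by
    intro m hm
    have h0 : K n = ⊥ := Submodule.finrank_eq_zero.mp (by rw [hrk' n (by omega) le_rfl]; omega)
    exact le_bot_iff.mp (h0 ▸ hKmono n m hm)
  have hbrS : ∀ k, 1 ≤ k → ∀ x y : L, y ∈ K k → ⁅x, y⁆ ∈ K (k+1) := by
    intro k hk x y hy
    have : ⁅x, y⁆ ∈ C L (k+1) := by
      rw [hCsucc k hk]
      exact LieSubmodule.lie_mem_lie (LieSubmodule.mem_top x) hy
    exact this
  have hbr2 : ∀ x y : L, ⁅x, y⁆ ∈ K 2 := fun x y =>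
    hbrS 1 le_rfl x y ((LieSubmodule.mem_toSubmodule _).mpr (by rw [hC1]; trivial))
  have hA1 : ∀ a b, 1 ≤ a → 1 ≤ b → ∀ x y : L, x ∈ K a → y ∈ K b → ⁅x, y⁆ ∈ K (a+b) := by
    intro a b ha hb x y hx hy
    have := lcs_lie_lcs_le L (b-1) (a-1) (LieSubmodule.lie_mem_lie (N := C L b) hx hy)
    have harith : (a-1) + (b-1) + 1 = a + b - 1 := by omega
    rw [harith] at this
    exact this
  -- pick u and v
  have hK2top : K 2 < ⊤ := by
    refine lt_of_le_of_ne le_top (fun hEq => ?_)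
    have := hrk' 2 le_rfl (by omega)
    rw [hEq] at this
    rw [finrank_top ℂ L] at this
    omega
  obtain ⟨u, -, huK2⟩ := SetLike.exists_of_lt hK2top
  have hW1lt : K 2 < K 2 ⊔ Submodule.span ℂ {u} := by
    refine lt_of_le_of_ne le_sup_left (fun hEq => huK2 ?_)
    rw [hEq]
    exact Submodule.mem_sup_right (Submodule.mem_span_singleton_self u)
  have hW1top : K 2 ⊔ Submodule.span ℂ {u} < ⊤ := by
    refine lt_of_le_of_ne le_top (fun hEq => ?_)
    have h1 : finrank ℂ ↥(K 2 ⊔ Submodule.span ℂ {u}) ≤ finrank ℂ (K 2) + finrank ℂ (Submodule.span ℂ {u}) :=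
      Submodule.finrank_add_le_finrank_add_finrank _ _
    have h2 : finrank ℂ (Submodule.span ℂ ({u} : Set L)) = 1 :=
      finrank_span_singleton (fun h0 => huK2 (h0 ▸ (K 2).zero_mem))
    rw [hEq, finrank_top ℂ L, hdim] at h1
    have := hrk' 2 le_rfl (by omega)
    omega
  obtain ⟨v, -, hvW1⟩ := SetLike.exists_of_lt hW1top
  have hTopDec : (⊤ : Submodule ℂ L) ≤ (K 2 ⊔ Submodule.span ℂ {u}) ⊔ Submodule.span ℂ {v} := by
    refine span_step L le_top Submodule.mem_top hvW1 ?_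
    have h1 : finrank ℂ (K 2) < finrank ℂ ↥(K 2 ⊔ Submodule.span ℂ {u}) :=
      Submodule.finrank_lt_finrank_of_lt hW1lt
    have h2 := hrk' 2 le_rfl (by omega)
    rw [finrank_top ℂ L, hdim]
    omega
  -- choose x k in K k \ K (k+1)
  have hxex : ∀ k : ℕ, ∃ x : L, 2 ≤ k → k ≤ n-2 → (x ∈ K k ∧ x ∉ K (k+1)) := by
    intro k
    by_cases hk : 2 ≤ k ∧ k ≤ n-2
    · obtain ⟨hk1, hk2⟩ := hk
      have hlt : K (k+1) < K k := by
        refine lt_of_le_of_ne (hKmono k (k+1) (by omega)) (fun hEq => ?_)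
        have h1 := hrk' k hk1 (by omega)
        have h2 := hrk' (k+1) (by omega) (by omega)
        rw [hEq, h1] at h2
        omega
      obtain ⟨x, hx1, hx2⟩ := SetLike.exists_of_lt hlt
      exact ⟨x, fun _ _ => ⟨hx1, hx2⟩⟩
    · exact ⟨0, fun h1 h2 => absurd ⟨h1, h2⟩ hk⟩
  choose xk hxk using hxex
  -- decomposition of K k
  have hdec : ∀ k, 2 ≤ k → k ≤ n-2 → K k ≤ K (k+1) ⊔ Submodule.span ℂ {xk k} := by
    intro k hk1 hk2
    refine span_step L (hKmono k (k+1) (by omega)) (hxk k hk1 hk2).1 (hxk k hk1 hk2).2 ?_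
    rw [hrk' k hk1 (by omega), hrk' (k+1) (by omega) (by omega)]
    omega
  -- the pair lemma
  have hpair : ∀ k, 2 ≤ k → k ≤ n-2 →
      ¬(⁅u, xk k⁆ ∈ K (k+2) ∧ ⁅v, xk k⁆ ∈ K (k+2)) := by
    rintro k hk1 hk2 ⟨hu2, hv2⟩
    have hle : C L (k+1) ≤ C L (k+2) := by
      rw [hCsucc k (by omega), LieSubmodule.lie_le_iff]
      intro z _ m hm
      have hzdec := hTopDec (Submodule.mem_top (x := z))
      rw [Submodule.mem_sup] at hzdec
      obtain ⟨p, hp, q, hq, rfl⟩ := hzdec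
      rw [Submodule.mem_sup] at hp
      obtain ⟨p2, hp2, p3, hp3, rfl⟩ := hp
      rw [Submodule.mem_span_singleton] at hp3 hq
      obtain ⟨a, rfl⟩ := hp3
      obtain ⟨b, rfl⟩ := hq
      have hmdec := hdec k hk1 hk2 hm
      rw [Submodule.mem_sup] at hmdec
      obtain ⟨m', hm', m3, hm3, hmeq⟩ := hmdec
      rw [Submodule.mem_span_singleton] at hm3
      obtain ⟨c, rfl⟩ := hm3
      have key : ⁅p2 + a • u + b • v, m' + c • xk k⁆ ∈ K (k+2) := by
        have e1 : ⁅p2, m' + c • xk k⁆ ∈ K (k+2) := by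
          have hmem : m' + c • xk k ∈ K k := by rw [hmeq]; exact hm
          have := hA1 2 k (by omega) (by omega) p2 _ hp2 hmem
          have harith : 2 + k = k + 2 := by omega
          rwa [harith] at this
        have e2 : ∀ y : L, ⁅y, m'⁆ ∈ K (k+2) := fun y => hbrS (k+1) (by omega) y m' hm'
        have e3 : ⁅a • u + b • v, m' + c • xk k⁆ ∈ K (k+2) := by
          have h4 : ∀ t : ℂ, ∀ y z : L, ⁅y, z⁆ ∈ K (k+2) → ⁅t • y, z⁆ ∈ K (k+2) :=
            fun t y z h => by rw [smul_lie]; exact Submodule.smul_mem _ _ h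
          rw [lie_add]
          refine add_mem ?_ ?_
          · rw [add_lie]; exact add_mem (h4 a u m' (e2 u)) (h4 b v m' (e2 v))
          · rw [lie_smul]
            refine Submodule.smul_mem _ _ ?_
            rw [add_lie]
            exact add_mem (h4 a u _ hu2) (h4 b v _ hv2)
        rw [add_assoc, add_lie]
        exact add_mem e1 e3
      rw [hmeq] at key
      exact key
    have heq : C L (k+2) = C L (k+1) := le_antisymm (hmono (k+1) (k+2) (by omega)) hle
    have hKeq : K (k+2) = K (k+1) := congrArg (fun I : LieIdeal ℂ L => (I : Submodule ℂ L)) heq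
    have h1 := hrk' (k+1) (by omega) (by omega)
    have h2 := hrk' (k+2) (by omega) (by omega)
    rw [hKeq] at h2
    omega
  have hpair1 : ⁅u, v⁆ ∉ K 3 := by
    intro huv
    have hvu : ⁅v, u⁆ ∈ K 3 := by
      rw [← lie_skew]
      exact Submodule.neg_mem _ huv
    have hle : C L 2 ≤ C L 3 := by
      rw [hCsucc 1 le_rfl, hC1, LieSubmodule.lie_le_iff]
      intro z _ m hm
      have hbr3 : ∀ y : L, ∀ w2 ∈ K 2, ⁅y, w2⁆ ∈ K 3 := fun y w2 hw2 => hbrS 2 (by omega) y w2 hw2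
      have hbr3' : ∀ y : L, ∀ w2 ∈ K 2, ⁅w2, y⁆ ∈ K 3 := by
        intro y w2 hw2
        rw [← lie_skew]
        exact Submodule.neg_mem _ (hbr3 y w2 hw2)
      have hzdec := hTopDec (Submodule.mem_top (x := z))
      rw [Submodule.mem_sup] at hzdec
      obtain ⟨p, hp, q, hq, rfl⟩ := hzdec
      rw [Submodule.mem_sup] at hp
      obtain ⟨p2, hp2, p3, hp3, rfl⟩ := hp
      rw [Submodule.mem_span_singleton] at hp3 hq
      obtain ⟨a, rfl⟩ := hp3
      obtain ⟨b, rfl⟩ := hq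
      have hmdec := hTopDec (Submodule.mem_top (x := m))
      rw [Submodule.mem_sup] at hmdec
      obtain ⟨p', hp', q', hq', rfl⟩ := hmdec
      rw [Submodule.mem_sup] at hp'
      obtain ⟨p2', hp2', p3', hp3', rfl⟩ := hp'
      rw [Submodule.mem_span_singleton] at hp3' hq'
      obtain ⟨a', rfl⟩ := hp3'
      obtain ⟨b', rfl⟩ := hq'
      show ⁅p2 + a • u + b • v, p2' + a' • u + b' • v⁆ ∈ K 3
      rw [add_lie, add_lie, lie_add, lie_add, lie_add, lie_add, lie_add, lie_add]
      refine add_mem (add_mem (add_mem (add_mem ?_ ?_) ?_) (add_mem (add_mem ?_ ?_) ?_))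
        (add_mem (add_mem ?_ ?_) ?_)
      · exact hbr3' p2' p2 hp2
      · rw [lie_smul]; exact Submodule.smul_mem _ _ (hbr3' u p2 hp2)
      · rw [lie_smul]; exact Submodule.smul_mem _ _ (hbr3' v p2 hp2)
      · rw [smul_lie]; exact Submodule.smul_mem _ _ (hbr3 u p2' hp2')
      · rw [smul_lie, lie_smul, lie_self, smul_zero, smul_zero]; exact Submodule.zero_mem _
      · rw [smul_lie, lie_smul]
        exact Submodule.smul_mem _ _ (Submodule.smul_mem _ _ huv)
      · rw [smul_lie]; exact Submodule.smul_mem _ _ (hbr3 v p2' hp2')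
      · rw [smul_lie, lie_smul]
        exact Submodule.smul_mem _ _ (Submodule.smul_mem _ _ hvu)
      · rw [smul_lie, lie_smul, lie_self, smul_zero, smul_zero]; exact Submodule.zero_mem _
    have heq : C L 3 = C L 2 := le_antisymm (hmono 2 3 (by omega)) hle
    have hKeq : K 3 = K 2 := congrArg (fun I : LieIdeal ℂ L => (I : Submodule ℂ L)) heq
    have h1 := hrk' 2 le_rfl (by omega)
    have h2 := hrk' 3 (by omega) (by omega)
    rw [hKeq] at h2
    omega
  -- bad sets and choice of lambda
  set Bad : ℕ → Set ℂ := fun k => {t : ℂ | ⁅u, xk k⁆ + t • ⁅v, xk k⁆ ∈ K (k+2)} with hBadDef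
  have hBadSub : ∀ k ∈ Finset.Icc 2 (n-2), (Bad k).Subsingleton := by
    intro k hk
    rw [Finset.mem_Icc] at hk
    by_cases hv2 : ⁅v, xk k⁆ ∈ K (k+2)
    · intro t1 ht1 t2 ht2
      exfalso
      refine hpair k hk.1 hk.2 ⟨?_, hv2⟩
      have : ⁅u, xk k⁆ = (⁅u, xk k⁆ + t1 • ⁅v, xk k⁆) - t1 • ⁅v, xk k⁆ := by abel
      rw [this]
      exact Submodule.sub_mem _ ht1 (Submodule.smul_mem _ _ hv2)
    · intro t1 ht1 t2 ht2
      by_contra hne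
      refine hv2 ?_
      have hsub : (t1 - t2) • ⁅v, xk k⁆ ∈ K (k+2) := by
        have : (t1 - t2) • ⁅v, xk k⁆ =
            (⁅u, xk k⁆ + t1 • ⁅v, xk k⁆) - (⁅u, xk k⁆ + t2 • ⁅v, xk k⁆) := by
          rw [sub_smul]; abel
        rw [this]
        exact Submodule.sub_mem _ ht1 ht2
      have := Submodule.smul_mem _ (t1 - t2)⁻¹ hsub
      rwa [inv_smul_smul₀ (sub_ne_zero.mpr hne)] at this
  have hfinBad : (⋃ k ∈ Finset.Icc 2 (n-2), Bad k).Finite :=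
    Set.Finite.biUnion (Finset.Icc 2 (n-2)).finite_toSet
      (fun k hk => (hBadSub k hk).finite)
  obtain ⟨lam, hlam⟩ := (Set.Finite.infinite_compl hfinBad).nonempty
  set e1 : L := u + lam • v with he1def
  have hgood : ∀ k, 2 ≤ k → k ≤ n-2 → ⁅e1, xk k⁆ ∉ K (k+2) := by
    intro k hk1 hk2 hmem
    refine hlam ?_
    rw [Set.mem_iUnion]
    refine ⟨k, ?_⟩
    rw [Set.mem_iUnion]
    refine ⟨Finset.mem_Icc.mpr ⟨hk1, hk2⟩, ?_⟩
    show ⁅u, xk k⁆ + lam • ⁅v, xk k⁆ ∈ K (k+2)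
    rwa [he1def, add_lie, smul_lie] at hmem
  have he1K2 : e1 ∉ K 2 := by
    intro hmem
    by_cases hl0 : lam = 0
    · rw [he1def, hl0, zero_smul, add_zero] at hmem
      exact huK2 hmem
    · refine hvW1 ?_
      have : v = lam⁻¹ • (e1 - u) := by
        rw [he1def]
        rw [add_sub_cancel_left, inv_smul_smul₀ hl0]
      rw [this]
      refine Submodule.smul_mem _ _ (Submodule.sub_mem _ ?_ ?_)
      · exact Submodule.mem_sup_left hmem
      · exact Submodule.mem_sup_right (Submodule.mem_span_singleton_self u)
  have he1v : ⁅e1, v⁆ = ⁅u, v⁆ := by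
    rw [he1def, add_lie, smul_lie, lie_self, smul_zero, add_zero]
  have he1v3 : ⁅e1, v⁆ ∉ K 3 := by rw [he1v]; exact hpair1
  -- the descending sequence w
  set w : ℕ → L := fun m => (fun y : L => ⁅e1, y⁆)^[m] v with hwdef
  have hw0 : w 0 = v := rfl
  have hwS : ∀ m, w (m+1) = ⁅e1, w m⁆ := by
    intro m
    rw [hwdef]
    simp only [Function.iterate_succ_apply']
  have hw : ∀ m, 1 ≤ m → m ≤ n-2 → w m ∈ K (m+1) ∧ w m ∉ K (m+2) := by
    intro m
    induction m with
    | zero => omega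
    | succ m ih =>
      intro _ hm2
      by_cases hm0 : m = 0
      · subst hm0
        rw [hwS 0, hw0]
        constructor
        · exact hbr2 e1 v
        · exact he1v3
      · have ⟨ihm1, ihm2⟩ := ih (by omega) (by omega)
        have hmem := hdec (m+1) (by omega) (by omega) ihm1
        rw [Submodule.mem_sup] at hmem
        obtain ⟨y', hy', m3, hm3, hmeq⟩ := hmem
        rw [Submodule.mem_span_singleton] at hm3
        obtain ⟨c, rfl⟩ := hm3
        have hc0 : c ≠ 0 := by
          rintro rfl
          rw [zero_smul, add_zero] at hmeq
          rw [← hmeq] at ihm2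
          exact ihm2 hy'
        constructor
        · rw [hwS m]
          exact hbrS (m+1) (by omega) e1 (w m) ihm1
        · intro hbad
          refine hgood (m+1) (by omega) (by omega) ?_
          have hsplit : ⁅e1, w m⁆ = ⁅e1, y'⁆ + c • ⁅e1, xk (m+1)⁆ := by
            rw [← hmeq, lie_add, lie_smul]
          have hy'mem : ⁅e1, y'⁆ ∈ K (m+3) := by
            have := hbrS (m+2) (by omega) e1 y' hy'
            rwa [show m+2+1 = m+3 by omega] at this
          have : c • ⁅e1, xk (m+1)⁆ ∈ K (m+3) := by
            have : c • ⁅e1, xk (m+1)⁆ = ⁅e1, w m⁆ - ⁅e1, y'⁆ := by rw [hsplit]; abel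
            rw [this]
            refine Submodule.sub_mem _ ?_ hy'mem
            rw [← hwS m]
            exact hbad
          have hfin := Submodule.smul_mem _ c⁻¹ this
          rw [inv_smul_smul₀ hc0] at hfin
          rwa [show m+1+2 = m+3 by omega]
  -- e2' and the correction scalar s
  have he2mem : w (n-2) ∈ K (n-1) ∧ w (n-2) ∉ K n := by
    have := hw (n-2) (by omega) le_rfl
    rwa [show n-2+1 = n-1 by omega, show n-2+2 = n by omega] at this
  have hKn : K n = ⊥ := hKbot n le_rfl
  have hspan2 : Submodule.span ℂ {w (n-2)} = K (n-1) := by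
    refine Submodule.eq_of_le_of_finrank_le ?_ ?_
    · rw [Submodule.span_singleton_le_iff_mem]; exact he2mem.1
    · have h1 : finrank ℂ (K (n-1)) = 1 := by
        rw [hrk' (n-1) (by omega) (by omega)]; omega
      have h2 : finrank ℂ (Submodule.span ℂ ({w (n-2)} : Set L)) = 1 := by
        refine finrank_span_singleton (fun h0 => he2mem.2 ?_)
        rw [h0]; exact Submodule.zero_mem _
      omega
  have hw3mem : w (n-3) ∈ K (n-2) := by
    have h := (hw (n-3) (by omega) (by omega)).1
    rwa [show n-3+1 = n-2 by omega] at h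
  have hbrv : ⁅w (n-3), v⁆ ∈ K (n-1) := by
    have h1 : ⁅v, w (n-3)⁆ ∈ K (n-1) := by
      have := hbrS (n-2) (by omega) v _ hw3mem
      rwa [show n-2+1 = n-1 by omega] at this
    rw [← lie_skew]
    exact Submodule.neg_mem _ h1
  obtain ⟨s, hs⟩ : ∃ s : ℂ, ⁅w (n-3), v⁆ = s • w (n-2) := by
    have := hbrv
    rw [← hspan2, Submodule.mem_span_singleton] at this
    obtain ⟨s, hs⟩ := this
    exact ⟨s, hs.symm⟩
  -- define the adapted family
  set e : ℕ → L := fun h => if h = 1 then e1 else if h = n then v + s • e1 else w (n - h)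
    with hedef
  have he_1 : e 1 = e1 := by simp only [hedef]; split_ifs with h1 <;> first | rfl | omega
  have he_n : e n = v + s • e1 := by
    simp only [hedef]; split_ifs with h1 h2 <;> first | rfl | omega
  have he_mid : ∀ h, 2 ≤ h → h ≤ n-1 → e h = w (n - h) := by
    intro h h1 h2
    simp only [hedef]; split_ifs with ha hb <;> first | rfl | omega
  have hemem : ∀ h, 2 ≤ h → h ≤ n-1 → e h ∈ K (n-h+1) ∧ e h ∉ K (n-h+2) := by
    intro h h1 h2
    rw [he_mid h h1 h2]
    exact hw (n-h) (by omega) (by omega)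
  -- adapted bracket relations
  have hbr1 : ∀ h, 3 ≤ h → h ≤ n → ⁅e 1, e h⁆ = e (h-1) := by
    intro h h3 hhn
    rw [he_1]
    by_cases hcase : h = n
    · subst hcase
      rw [he_n, lie_add, lie_smul, lie_self, smul_zero, add_zero,
        he_mid (h-1) (by omega) (by omega), show h - (h-1) = 1 by omega, hwS 0, hw0]
    · rw [he_mid h (by omega) (by omega), he_mid (h-1) (by omega) (by omega),
        show n - (h-1) = (n-h)+1 by omega, hwS (n-h)]
  have hzero_e2 : ∀ y : L, ⁅w (n-2), y⁆ = 0 := by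
    intro y
    have h1 : ⁅y, w (n-2)⁆ ∈ K n := by
      have := hbrS (n-1) (by omega) y _ he2mem.1
      rwa [show n-1+1 = n by omega] at this
    rw [hKn, Submodule.mem_bot] at h1
    rw [← lie_skew, h1, neg_zero]
  have hbr2e : ∀ h, 1 ≤ h → h ≤ n → ⁅e 2, e h⁆ = 0 := by
    intro h _ _
    rw [he_mid 2 le_rfl (by omega), show n - 2 = n-2 by rfl]
    exact hzero_e2 (e h)
  have hbr3e : ∀ h, 2 ≤ h → h ≤ n → ⁅e 3, e h⁆ = 0 := by
    intro h h2 hhn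
    rw [he_mid 3 (by omega) (by omega)]
    by_cases hcase : h = n
    · rw [hcase, he_n, lie_add, lie_smul, hs]
      have h1 : ⁅w (n-3), e1⁆ = - w (n-2) := by
        have h2 : ⁅e1, w (n-3)⁆ = w (n-2) := by
          rw [← hwS (n-3), show n-3+1 = n-2 by omega]
        rw [← lie_skew, h2]
      rw [h1, smul_neg]
      abel
    · have hh : e h ∈ K 2 := by
        have := (hemem h h2 (by omega)).1
        exact hKmono 2 (n-h+1) (by omega) this
      have := hA1 (n-2) 2 (by omega) (by omega) (w (n-3)) (e h) hw3mem hh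
      rw [show n-2+2 = n by omega, hKn, Submodule.mem_bot] at this
      exact this
  -- the basis
  set fam : Fin n → L := fun i => e (i.1 + 1) with hfamdef
  set S : Submodule ℂ L := Submodule.span ℂ (Set.range fam) with hSdef
  have hfamS : ∀ h, 1 ≤ h → h ≤ n → e h ∈ S := by
    intro h h1 h2
    have : fam ⟨h-1, by omega⟩ = e h := by
      rw [hfamdef]
      simp only
      congr 1
      omega
    rw [← this]
    exact Submodule.subset_span ⟨_, rfl⟩
  have he1S : e1 ∈ S := by rw [← he_1]; exact hfamS 1 le_rfl (by omega)
  have hvS : v ∈ S := by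
    have : v = e n - s • e1 := by rw [he_n]; abel
    rw [this]
    exact Submodule.sub_mem _ (hfamS n (by omega) le_rfl) (Submodule.smul_mem _ _ he1S)
  have huS : u ∈ S := by
    have : u = e1 - lam • v := by rw [he1def]; abel
    rw [this]
    exact Submodule.sub_mem _ he1S (Submodule.smul_mem _ _ hvS)
  have hKS : ∀ d k, 2 ≤ k → n ≤ k + d → K k ≤ S := by
    intro d
    induction d with
    | zero =>
      intro k hk2 hkd
      rw [hKbot k (by omega)]
      exact bot_le
    | succ d ih =>
      intro k hk2 hkd
      by_cases hcase : n ≤ k + d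
      · exact ih k hk2 hcase
      · have hk1 : k ≤ n - 1 := by omega
        have hx := hemem (n-k+1) (by omega) (by omega)
        rw [show n - (n-k+1) + 1 = k by omega, show n - (n-k+1) + 2 = k + 1 by omega] at hx
        have hstep : K k ≤ K (k+1) ⊔ Submodule.span ℂ {e (n-k+1)} := by
          refine span_step L (hKmono k (k+1) (by omega)) hx.1 hx.2 ?_
          rw [hrk' k hk2 (by omega), hrk' (k+1) (by omega) (by omega)]
          omega
        refine le_trans hstep (sup_le (ih (k+1) (by omega) (by omega)) ?_)
        rw [Submodule.span_singleton_le_iff_mem]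
        exact hfamS (n-k+1) (by omega) (by omega)
  have hTopS : (⊤ : Submodule ℂ L) ≤ S := by
    refine le_trans hTopDec (sup_le (sup_le ?_ ?_) ?_)
    · exact hKS n 2 le_rfl (by omega)
    · rw [Submodule.span_singleton_le_iff_mem]; exact huS
    · rw [Submodule.span_singleton_le_iff_mem]; exact hvS
  have hcard : Fintype.card (Fin n) = finrank ℂ L := by rw [Fintype.card_fin, hdim]
  let b : Basis (Fin n) ℂ L := basisOfTopLeSpanOfCardEqFinrank fam hTopS hcard
  have hbe : ∀ i : Fin n, b i = e (i.1 + 1) := by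
    intro i
    show (basisOfTopLeSpanOfCardEqFinrank fam hTopS hcard) i = e (i.1+1)
    rw [coe_basisOfTopLeSpanOfCardEqFinrank]
  exact ⟨e, ⟨b, hbe⟩, hbr1, hbr2e, hbr3e⟩

/-- Every filiform Lie algebra with triple `(n-2, n-2, n)`, `n ≥ 6`, admits an adapted
basis realizing the normalized law. -/
theorem statement5 (n : ℕ) (hn : 6 ≤ n) (h : HasTriple L (n - 2) (n - 2) n) :
    ∃ (f : ℕ → L) (γ' β' : ℂ),
      IsAdaptedBasis L n f ∧ LawNm2Normalized L n f γ' β' := by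
  obtain ⟨hfil, -, htrip⟩ := h
  obtain ⟨e, he⟩ := exists_adapted L n hn hfil
  obtain ⟨⟨b, hb⟩, h1e, h2e, h3e⟩ := he
  obtain ⟨hz1, hz2⟩ := htrip e ⟨⟨b, hb⟩, h1e, h2e, h3e⟩
  have hcent2 : ∀ h, 1 ≤ h → h ≤ n → ⁅e h, e 2⁆ = 0 := by
    intro m hm1 hm2
    rw [← lie_skew, h2e m hm1 hm2, neg_zero]
  have hcent3 : ∀ h, 2 ≤ h → h ≤ n → ⁅e h, e 3⁆ = 0 := by
    intro m hm1 hm2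
    rw [← lie_skew, h3e m hm1 hm2, neg_zero]
  have he12 : ⁅e 1, e 2⁆ = 0 := by
    rw [← lie_skew, h2e 1 le_rfl (by omega), neg_zero]
  have hlow : ∀ k, 4 ≤ k → k ≤ n - 3 → ⁅e k, e n⁆ = 0 := by
    intro k h4 h3'
    by_contra hne
    have := hz1.2 ⟨h4, hne⟩
    omega
  have hZd : ∀ d i j, j + d = n → 2 ≤ i → i < j → i ≤ n - 3 → ⁅e i, e j⁆ = 0 := by
    intro d
    induction d with
    | zero =>
      intro i j hj hi2 hij hi3
      have hj' : j = n := by omega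
      rw [hj']
      by_cases hi2' : i = 2
      · rw [hi2']; exact h2e n (by omega) le_rfl
      by_cases hi3' : i = 3
      · rw [hi3']; exact h3e n (by omega) le_rfl
      exact hlow i (by omega) hi3
    | succ d ih =>
      intro i j hj hi2 hij hi3
      by_cases hi2' : i = 2
      · rw [hi2']; exact h2e j (by omega) (by omega)
      by_cases hi3' : i = 3
      · rw [hi3']; exact h3e j (by omega) (by omega)
      have hi4 : 4 ≤ i := by omega
      have hL := leibniz_lie (e 1) (e i) (e (j+1))
      rw [ih i (j+1) (by omega) hi2 (by omega) hi3, lie_zero,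
        h1e i (by omega) (by omega),
        ih (i-1) (j+1) (by omega) (by omega) (by omega) (by omega),
        h1e (j+1) (by omega) (by omega), zero_add,
        Nat.add_sub_cancel] at hL
      exact hL.symm
  have hZ' : ∀ i j, 2 ≤ i → i < j → j ≤ n → i ≤ n - 3 → ⁅e i, e j⁆ = 0 :=
    fun i j hi hij hj hi3 => hZd (n - j) i j (by omega) hi hij hi3
  set X := ⁅e (n-2), e n⁆ with hXdef
  set Y := ⁅e (n-1), e n⁆ with hYdef
  have harr1 : n - 2 - 1 = n - 3 := by omega
  have h1 : ⁅e (n-2), e (n-1)⁆ = ⁅e 1, X⁆ := by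
    have hL := leibniz_lie (e 1) (e (n-2)) (e n)
    rw [h1e (n-2) (by omega) (by omega), harr1,
      hZ' (n-3) n (by omega) (by omega) le_rfl (by omega),
      h1e n (by omega) le_rfl, zero_add] at hL
    exact hL.symm
  have h2 : ⁅e 1, ⁅e 1, X⁆⁆ = 0 := by
    rw [← h1]
    have hL := leibniz_lie (e 1) (e (n-2)) (e (n-1))
    rw [h1e (n-2) (by omega) (by omega), harr1,
      hZ' (n-3) (n-1) (by omega) (by omega) (by omega) (by omega),
      h1e (n-1) (by omega) (by omega), show n-1-1 = n-2 from by omega,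
      lie_self, zero_add] at hL
    exact hL
  have h3 : ⁅e 1, Y⁆ = X := by
    have hL := leibniz_lie (e 1) (e (n-1)) (e n)
    rw [h1e (n-1) (by omega) (by omega), show n-1-1 = n-2 from by omega,
      h1e n (by omega) le_rfl, lie_self, add_zero] at hL
    exact hL
  obtain ⟨c, hXexp⟩ := expand_coords L n b e hb X
  obtain ⟨d, hYexp⟩ := expand_coords L n b e hb Y
  -- coefficients of X above index 3 vanish
  have hA : ∀ m, 4 ≤ m → m ≤ n → c m = 0 := by
    have hsum0 : ∑ m ∈ Finset.Icc 1 n,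
        (if 2 ≤ m ∧ m ≤ n-2 then c (m+2) else 0) • e m = 0 := by
      have e1 : ∑ m ∈ Finset.Icc 1 n, (if 2 ≤ m ∧ m ≤ n-2 then c (m+2) else 0) • e m
          = ∑ m ∈ Finset.Icc 2 (n-2), c (m+2) • e m := by
        have h0 : ∑ m ∈ Finset.Icc 2 (n-2), (if 2 ≤ m ∧ m ≤ n-2 then c (m+2) else 0) • e m
            = ∑ m ∈ Finset.Icc 1 n, (if 2 ≤ m ∧ m ≤ n-2 then c (m+2) else 0) • e m := by
          refine Finset.sum_subset (Finset.Icc_subset_Icc (by omega) (by omega))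
            (fun x hx hx' => ?_)
          rw [Finset.mem_Icc] at hx hx'
          rw [if_neg (by omega), zero_smul]
        rw [← h0]
        refine Finset.sum_congr rfl (fun m hm => ?_)
        rw [Finset.mem_Icc] at hm
        rw [if_pos ⟨hm.1, hm.2⟩]
      have e2 : ∑ m ∈ Finset.Icc 2 (n-2), c (m+2) • e m
          = ∑ m ∈ Finset.Icc 4 n, c m • e (m-2) := by
        refine Finset.sum_bij' (fun m (_ : m ∈ Finset.Icc 2 (n-2)) => m + 2)
          (fun m (_ : m ∈ Finset.Icc 4 n) => m - 2) ?_ ?_ ?_ ?_ ?_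
        · intro a ha
          rw [Finset.mem_Icc] at ha
          show a + 2 ∈ Finset.Icc 4 n
          rw [Finset.mem_Icc]
          omega
        · intro a ha
          rw [Finset.mem_Icc] at ha
          show a - 2 ∈ Finset.Icc 2 (n-2)
          rw [Finset.mem_Icc]
          omega
        · intro a ha
          show a + 2 - 2 = a
          omega
        · intro a ha
          rw [Finset.mem_Icc] at ha
          show a - 2 + 2 = a
          omega
        · intro a ha
          show c (a+2) • e a = c (a+2) • e (a+2-2)
          rw [Nat.add_sub_cancel]
      have e3 : ∑ m ∈ Finset.Icc 4 n, c m • e (m-2)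
          = ∑ m ∈ Finset.Icc 1 n, c m • ⁅e 1, ⁅e 1, e m⁆⁆ := by
        have h0 : ∑ m ∈ Finset.Icc 4 n, c m • ⁅e 1, ⁅e 1, e m⁆⁆
            = ∑ m ∈ Finset.Icc 1 n, c m • ⁅e 1, ⁅e 1, e m⁆⁆ := by
          refine Finset.sum_subset (Finset.Icc_subset_Icc (by omega) (by omega))
            (fun x hx hx' => ?_)
          rw [Finset.mem_Icc] at hx hx'
          have hx3 : x ≤ 3 := by omega
          have hx1 : 1 ≤ x := hx.1
          interval_cases x
          · rw [lie_self, lie_zero, smul_zero]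
          · rw [he12, lie_zero, smul_zero]
          · rw [h1e 3 le_rfl (by omega), show (3:ℕ)-1 = 2 from rfl, he12, smul_zero]
        rw [← h0]
        refine Finset.sum_congr rfl (fun m hm => ?_)
        rw [Finset.mem_Icc] at hm
        rw [h1e m (by omega) hm.2, h1e (m-1) (by omega) (by omega),
          show m-1-1 = m-2 from by omega]
      have e4 : ∑ m ∈ Finset.Icc 1 n, c m • ⁅e 1, ⁅e 1, e m⁆⁆ = ⁅e 1, ⁅e 1, X⁆⁆ := by
        conv_rhs => rw [hXexp]
        rw [lie_sum_right, lie_sum_right]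
        refine Finset.sum_congr rfl (fun m hm => ?_)
        rw [lie_smul, lie_smul]
      rw [e1, e2, e3, e4, h2]
    have hind := indep_coeff L n b e hb _ hsum0
    intro m h4 hm
    have := hind (m-2) (by omega) (by omega)
    rw [if_pos ⟨by omega, by omega⟩, show m-2+2 = m from by omega] at this
    exact this
  -- relations between d and c
  have hB := indep_coeff L n b e hb
    (fun m => (if 2 ≤ m ∧ m ≤ n-1 then d (m+1) else 0) - c m) ?hBsum
  case hBsum =>
    have hsplit : ∑ m ∈ Finset.Icc 1 n,
        ((if 2 ≤ m ∧ m ≤ n-1 then d (m+1) else 0) - c m) • e m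
        = (∑ m ∈ Finset.Icc 1 n, (if 2 ≤ m ∧ m ≤ n-1 then d (m+1) else 0) • e m)
          - ∑ m ∈ Finset.Icc 1 n, c m • e m := by
      rw [← Finset.sum_sub_distrib]
      refine Finset.sum_congr rfl (fun m _ => ?_)
      rw [sub_smul]
    rw [hsplit, ← hXexp]
    have s1 : ∑ m ∈ Finset.Icc 1 n, (if 2 ≤ m ∧ m ≤ n-1 then d (m+1) else 0) • e m
        = ∑ m ∈ Finset.Icc 2 (n-1), d (m+1) • e m := by
      have h0 : ∑ m ∈ Finset.Icc 2 (n-1), (if 2 ≤ m ∧ m ≤ n-1 then d (m+1) else 0) • e m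
          = ∑ m ∈ Finset.Icc 1 n, (if 2 ≤ m ∧ m ≤ n-1 then d (m+1) else 0) • e m := by
        refine Finset.sum_subset (Finset.Icc_subset_Icc (by omega) (by omega))
          (fun x hx hx' => ?_)
        rw [Finset.mem_Icc] at hx hx'
        rw [if_neg (by omega), zero_smul]
      rw [← h0]
      refine Finset.sum_congr rfl (fun m hm => ?_)
      rw [Finset.mem_Icc] at hm
      rw [if_pos ⟨hm.1, hm.2⟩]
    have s2 : ∑ m ∈ Finset.Icc 2 (n-1), d (m+1) • e m
        = ∑ m ∈ Finset.Icc 3 n, d m • e (m-1) := by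
      refine Finset.sum_bij' (fun m (_ : m ∈ Finset.Icc 2 (n-1)) => m + 1)
        (fun m (_ : m ∈ Finset.Icc 3 n) => m - 1) ?_ ?_ ?_ ?_ ?_
      · intro a ha
        rw [Finset.mem_Icc] at ha
        show a + 1 ∈ Finset.Icc 3 n
        rw [Finset.mem_Icc]
        omega
      · intro a ha
        rw [Finset.mem_Icc] at ha
        show a - 1 ∈ Finset.Icc 2 (n-1)
        rw [Finset.mem_Icc]
        omega
      · intro a ha
        show a + 1 - 1 = a
        omega
      · intro a ha
        rw [Finset.mem_Icc] at ha
        show a - 1 + 1 = a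
        omega
      · intro a ha
        show d (a+1) • e a = d (a+1) • e (a+1-1)
        rw [Nat.add_sub_cancel]
    have s3 : ∑ m ∈ Finset.Icc 3 n, d m • e (m-1)
        = ∑ m ∈ Finset.Icc 1 n, d m • ⁅e 1, e m⁆ := by
      have h0 : ∑ m ∈ Finset.Icc 3 n, d m • ⁅e 1, e m⁆
          = ∑ m ∈ Finset.Icc 1 n, d m • ⁅e 1, e m⁆ := by
        refine Finset.sum_subset (Finset.Icc_subset_Icc (by omega) (by omega))
          (fun x hx hx' => ?_)
        rw [Finset.mem_Icc] at hx hx'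
        have hx2 : x ≤ 2 := by omega
        have hx1 : 1 ≤ x := hx.1
        interval_cases x
        · rw [lie_self, smul_zero]
        · rw [he12, smul_zero]
      rw [← h0]
      refine Finset.sum_congr rfl (fun m hm => ?_)
      rw [Finset.mem_Icc] at hm
      rw [h1e m hm.1 hm.2]
    have s4 : ∑ m ∈ Finset.Icc 1 n, d m • ⁅e 1, e m⁆ = ⁅e 1, Y⁆ := by
      conv_rhs => rw [hYexp]
      rw [lie_sum_right]
      refine (Finset.sum_congr rfl (fun m hm => ?_)).symm
      rw [lie_smul]
    rw [s1, s2, s3, s4, h3, sub_self]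
  have hc1 : c 1 = 0 := by
    have := hB 1 le_rfl (by omega)
    rw [if_neg (by omega), zero_sub, neg_eq_zero] at this
    exact this
  have hd3 : d 3 = c 2 := by
    have := hB 2 (by omega) (by omega)
    rw [if_pos ⟨le_rfl, by omega⟩] at this
    have h23 : (2:ℕ) + 1 = 3 := rfl
    rw [h23] at this
    exact sub_eq_zero.mp this
  have hd4 : d 4 = c 3 := by
    have := hB 3 (by omega) (by omega)
    rw [if_pos ⟨by omega, by omega⟩] at this
    have h34 : (3:ℕ) + 1 = 4 := rfl
    rw [h34] at this
    exact sub_eq_zero.mp this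
  have hd5 : ∀ m, 5 ≤ m → m ≤ n → d m = 0 := by
    intro m h5 hm
    have := hB (m-1) (by omega) (by omega)
    rw [if_pos ⟨by omega, by omega⟩, show m-1+1 = m from by omega] at this
    have hc := hA (m-1) (by omega) (by omega)
    rw [hc, sub_zero] at this
    exact this
  have h1X : ⁅e 1, X⁆ = c 3 • e 2 := by
    conv_lhs => rw [hXexp]
    rw [lie_sum_right]
    rw [Finset.sum_eq_single_of_mem 3 (Finset.mem_Icc.mpr ⟨by omega, by omega⟩) ?_]
    · rw [lie_smul, h1e 3 le_rfl (by omega), show (3:ℕ)-1 = 2 from rfl]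
    · intro m hm hne
      rw [Finset.mem_Icc] at hm
      rw [lie_smul]
      by_cases hm1 : m = 1
      · rw [hm1, lie_self, smul_zero]
      by_cases hm2 : m = 2
      · rw [hm2, he12, smul_zero]
      · rw [hA m (by omega) hm.2, zero_smul]
  have hc3 : c 3 ≠ 0 := by
    intro h0
    refine hz2.1.2 ?_
    rw [show n-2+1 = n-1 from by omega, h1, h1X, h0, zero_smul]
  have h1Xv : ⁅e (n-2), e (n-1)⁆ = c 3 • e 2 := by rw [h1, h1X]
  have hen1X : ⁅e (n-1), X⁆ = 0 := by
    conv_lhs => rw [hXexp]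
    rw [lie_sum_right]
    refine Finset.sum_eq_zero (fun m hm => ?_)
    rw [Finset.mem_Icc] at hm
    rw [lie_smul]
    by_cases hm1 : m = 1
    · rw [hm1, hc1, zero_smul]
    by_cases hm2 : m = 2
    · rw [hm2, hcent2 (n-1) (by omega) (by omega), smul_zero]
    by_cases hm3 : m = 3
    · rw [hm3, hcent3 (n-1) (by omega) (by omega), smul_zero]
    · rw [hA m (by omega) hm.2, zero_smul]
  have h4Y : ⁅e (n-2), Y⁆ = 0 := by
    have hL := leibniz_lie (e (n-2)) (e (n-1)) (e n)
    rw [h1Xv, smul_lie, h2e n (by omega) le_rfl, smul_zero, hen1X, add_zero] at hL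
    exact hL
  have hd1 : d 1 = 0 := by
    have hsum : ⁅e (n-2), Y⁆ = d 1 • ⁅e (n-2), e 1⁆ := by
      conv_lhs => rw [hYexp]
      rw [lie_sum_right]
      rw [Finset.sum_eq_single_of_mem 1 (Finset.mem_Icc.mpr ⟨le_rfl, by omega⟩) ?_]
      · rw [lie_smul]
      · intro m hm hne
        rw [Finset.mem_Icc] at hm
        rw [lie_smul]
        by_cases hm2 : m = 2
        · rw [hm2, hcent2 (n-2) (by omega) (by omega), smul_zero]
        by_cases hm3 : m = 3
        · rw [hm3, hcent3 (n-2) (by omega) (by omega), smul_zero]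
        by_cases hm4 : m = 4
        · rw [hm4]
          by_cases hn6 : n - 2 = 4
          · rw [show (4:ℕ) = n-2 from by omega, lie_self, smul_zero]
          · rw [← lie_skew, hZ' 4 (n-2) (by omega) (by omega) (by omega) (by omega),
              neg_zero, smul_zero]
        · rw [hd5 m (by omega) hm.2, zero_smul]
    rw [h4Y] at hsum
    have hbr : ⁅e (n-2), e 1⁆ = - e (n-3) := by
      rw [← lie_skew, h1e (n-2) (by omega) (by omega), harr1]
    rw [hbr, smul_neg] at hsum
    have hz : d 1 • e (n-3) = 0 := by
      rw [← neg_eq_zero, ← hsum]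
    have hne : e (n-3) ≠ 0 := by
      have hbn : b ⟨n-4, by omega⟩ = e (n-3) := by
        rw [hb]
        congr 1
        show n - 4 + 1 = n - 3
        omega
      rw [← hbn]
      exact b.ne_zero _
    rcases smul_eq_zero.mp hz with h' | h'
    · exact h'
    · exact absurd h' hne
  have hXval : X = c 2 • e 2 + c 3 • e 3 := by
    have h0 : ∑ m ∈ ({2,3} : Finset ℕ), c m • e m = ∑ m ∈ Finset.Icc 1 n, c m • e m := by
      refine Finset.sum_subset ?_ (fun x hx hx' => ?_)
      · intro x hx
        simp only [Finset.mem_insert, Finset.mem_singleton] at hx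
        rw [Finset.mem_Icc]
        omega
      · rw [Finset.mem_Icc] at hx
        simp only [Finset.mem_insert, Finset.mem_singleton] at hx'
        by_cases hx1 : x = 1
        · rw [hx1, hc1, zero_smul]
        · rw [hA x (by omega) hx.2, zero_smul]
    rw [hXexp, ← h0, Finset.sum_pair (by norm_num : (2:ℕ) ≠ 3)]
  have hYval : Y = d 2 • e 2 + c 2 • e 3 + c 3 • e 4 := by
    have h0 : ∑ m ∈ ({2,3,4} : Finset ℕ), d m • e m = ∑ m ∈ Finset.Icc 1 n, d m • e m := by
      refine Finset.sum_subset ?_ (fun x hx hx' => ?_)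
      · intro x hx
        simp only [Finset.mem_insert, Finset.mem_singleton] at hx
        rw [Finset.mem_Icc]
        omega
      · rw [Finset.mem_Icc] at hx
        simp only [Finset.mem_insert, Finset.mem_singleton] at hx'
        by_cases hx1 : x = 1
        · rw [hx1, hd1, zero_smul]
        · rw [hd5 x (by omega) hx.2, zero_smul]
    rw [hYexp, ← h0, show ({2,3,4} : Finset ℕ) = insert 2 {3,4} from rfl,
      Finset.sum_insert (by norm_num), Finset.sum_pair (by norm_num : (3:ℕ) ≠ 4),
      hd3, hd4, ← add_assoc]
  -- construct the normalized basis
  set f : ℕ → L := fun m => if m = 1 then e 1 else (c 3)⁻¹ • e m with hfdef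
  have hf1 : f 1 = e 1 := by simp [hfdef]
  have hfm : ∀ m, m ≠ 1 → f m = (c 3)⁻¹ • e m := by
    intro m hm
    simp only [hfdef]
    rw [if_neg hm]
  have hbasis : ∃ b' : Basis (Fin n) ℂ L, ∀ i : Fin n, b' i = f (i.1 + 1) := by
    refine ⟨b.unitsSMul (fun i => if i.1 = 0 then 1 else Units.mk0 (c 3)⁻¹ (inv_ne_zero hc3)),
      fun i => ?_⟩
    rw [Basis.unitsSMul_apply]
    by_cases hi : i.1 = 0
    · rw [if_pos hi, one_smul, hb i, show i.1 + 1 = 1 from by omega, hf1,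
        show (1:ℕ) = i.1 + 1 from by omega]
    · rw [if_neg hi, hfm (i.1+1) (by omega), hb i]
      rfl
  have hfadapt : IsAdaptedBasis L n f := by
    refine ⟨hbasis, ?_, ?_, ?_⟩
    · intro m h3' hmn
      rw [hf1, hfm m (by omega), lie_smul, h1e m h3' hmn, hfm (m-1) (by omega)]
    · intro m h1' hmn
      rw [hfm 2 (by omega), smul_lie]
      by_cases hm1 : m = 1
      · rw [hm1, hf1, h2e 1 le_rfl (by omega), smul_zero]
      · rw [hfm m hm1, lie_smul, h2e m h1' hmn, smul_zero, smul_zero]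
    · intro m h2' hmn
      rw [hfm 3 (by omega), hfm m (by omega), smul_lie, lie_smul,
        h3e m h2' hmn, smul_zero, smul_zero]
  refine ⟨f, c 2 * (c 3)⁻¹, d 2 * (c 3)⁻¹, hfadapt, ?_, hfadapt.2.1, ?_, ?_, ?_, ?_⟩
  · rw [hf1, hfm 2 (by omega), lie_smul, he12, smul_zero]
  · intro i j hi hij hj hex1 hex2 hex3
    have hi3 : i ≤ n - 3 := by omega
    rw [hfm i (by omega), hfm j (by omega), smul_lie, lie_smul,
      hZ' i j hi hij hj hi3, smul_zero, smul_zero]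
  · rw [hfm (n-2) (by omega), hfm (n-1) (by omega), smul_lie, lie_smul, h1Xv,
      hfm 2 (by omega)]
    match_scalars
    field_simp
  · rw [hfm (n-2) (by omega), hfm n (by omega), smul_lie, lie_smul, ← hXdef, hXval,
      hfm 3 (by omega), hfm 2 (by omega)]
    match_scalars <;> field_simp <;> ring
  · rw [hfm (n-1) (by omega), hfm n (by omega), smul_lie, lie_smul, ← hYdef, hYval,
      hfm 4 (by omega), hfm 3 (by omega), hfm 2 (by omega)]
    match_scalars <;> field_simp <;> ring
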